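/- Let q be a prime power. In ℝ[[t]], the infinite product ∏_{n≥4} (1 − q^{−n} t)^{−(⌊n/2⌋ − 1)} converges term by term and its limit equals exp(∑_{v≥1} t^v/(v · (q^{2v} − 1)(q^{2v} − q^v))). -/

import Mathlib

open Filter PowerSeries

noncomputable def pexp (h : PowerSeries ℝ) : PowerSeries ℝ :=
  PowerSeries.mk fun k =>
    ∑ m ∈ Finset.range (k + 1), ((Nat.factorial m : ℝ))⁻¹ * PowerSeries.coeff (R := ℝ) k (h ^ m)

namespace ZBGL2

lemma coeff_pow_zero {h : PowerSeries ℝ} (hh : constantCoeff (R := ℝ) h = 0) {k m : ℕ} (hkm : k < m) :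
    coeff (R := ℝ) k (h ^ m) = 0 := by
  obtain ⟨g, hg⟩ := (X_dvd_iff.mpr hh)
  subst hg
  rw [mul_pow, mul_comm, coeff_mul_X_pow', if_neg (by omega)]

/-- partial sums of the exponential series -/
noncomputable def S (h : PowerSeries ℝ) (K : ℕ) : PowerSeries ℝ :=
  ∑ m ∈ Finset.range K, ((Nat.factorial m : ℝ))⁻¹ • h ^ m

lemma coeff_S (h : PowerSeries ℝ) (K k : ℕ) :
    coeff (R := ℝ) k (S h K) = ∑ m ∈ Finset.range K, ((Nat.factorial m : ℝ))⁻¹ * coeff (R := ℝ) k (h ^ m) := by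
  simp [S]

lemma coeff_pexp_eq_S {h : PowerSeries ℝ} (hh : constantCoeff (R := ℝ) h = 0) {k K : ℕ} (hK : k < K) :
    coeff (R := ℝ) k (pexp h) = coeff (R := ℝ) k (S h K) := by
  rw [coeff_S, pexp, coeff_mk]
  refine Finset.sum_subset (by intro x hx; simp_all; omega) ?_
  intro m hm hm'
  simp only [Finset.mem_range, not_lt] at hm'
  rw [coeff_pow_zero hh hm', mul_zero]

lemma constantCoeff_pexp (h : PowerSeries ℝ) : constantCoeff (R := ℝ) (pexp h) = 1 := by
  rw [← coeff_zero_eq_constantCoeff]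
  simp [pexp]

lemma ode_unique (u f g : PowerSeries ℝ) (hf : d⁄dX ℝ f = u * f) (hg : d⁄dX ℝ g = u * g)
    (h0 : coeff (R := ℝ) 0 f = coeff (R := ℝ) 0 g) : f = g := by
  ext k
  induction k using Nat.strong_induction_on with
  | _ k ih =>
    match k with
    | 0 => exact h0
    | (k+1) =>
      have hf' := congrArg (coeff (R := ℝ) k) hf
      have hg' := congrArg (coeff (R := ℝ) k) hg
      rw [coeff_derivative] at hf' hg'
      have hsum : coeff (R := ℝ) k (u * f) = coeff (R := ℝ) k (u * g) := by
        rw [coeff_mul, coeff_mul]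
        refine Finset.sum_congr rfl fun p hp => ?_
        rw [Finset.HasAntidiagonal.mem_antidiagonal] at hp
        rw [ih p.2 (by omega)]
      have hk : ((k : ℝ) + 1) ≠ 0 := by positivity
      exact mul_right_cancel₀ hk (hf'.trans (hsum.trans hg'.symm))

lemma derivative_S_succ {h : PowerSeries ℝ} (K : ℕ) :
    d⁄dX ℝ (S h (K + 1)) = d⁄dX ℝ h * S h K := by
  unfold S
  rw [map_sum, Finset.sum_range_succ', Finset.mul_sum]
  have h0 : d⁄dX ℝ (((Nat.factorial 0 : ℝ))⁻¹ • h ^ 0) = 0 := by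
    simp
  rw [h0, add_zero]
  refine Finset.sum_congr rfl fun m _ => ?_
  rw [Derivation.map_smul, Derivation.leibniz_pow, Nat.add_sub_cancel]
  rw [PowerSeries.smul_eq_C_mul, PowerSeries.smul_eq_C_mul, nsmul_eq_mul, smul_eq_mul,
    ← map_natCast (C (R := ℝ)) (m + 1)]
  have hc : (Nat.factorial (m + 1) : ℝ)⁻¹ * ((m + 1 : ℕ) : ℝ) = (Nat.factorial m : ℝ)⁻¹ := by
    rw [Nat.factorial_succ]
    push_cast
    have h1 : (Nat.factorial m : ℝ) ≠ 0 := Nat.cast_ne_zero.mpr (Nat.factorial_ne_zero m)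
    have h2 : ((m : ℝ) + 1) ≠ 0 := by positivity
    field_simp
  calc C (R := ℝ) (Nat.factorial (m + 1) : ℝ)⁻¹ * (C (R := ℝ) ((m + 1 : ℕ) : ℝ) * (h ^ m * d⁄dX ℝ h))
      = C (R := ℝ) ((Nat.factorial (m + 1) : ℝ)⁻¹ * ((m + 1 : ℕ) : ℝ)) * (h ^ m * d⁄dX ℝ h) := by
        rw [map_mul]; ring
    _ = d⁄dX ℝ h * (C (R := ℝ) (Nat.factorial m : ℝ)⁻¹ * h ^ m) := by rw [hc]; ring

lemma derivative_pexp {h : PowerSeries ℝ} (hh : constantCoeff (R := ℝ) h = 0) :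
    d⁄dX ℝ (pexp h) = d⁄dX ℝ h * pexp h := by
  ext k
  rw [coeff_derivative, coeff_pexp_eq_S hh (show k + 1 < k + 2 from Nat.lt_succ_self _),
    ← coeff_derivative, derivative_S_succ, coeff_mul, coeff_mul]
  refine Finset.sum_congr rfl fun p hp => ?_
  rw [Finset.HasAntidiagonal.mem_antidiagonal] at hp
  rw [coeff_pexp_eq_S hh (show p.2 < k + 1 by omega)]

lemma pexp_add {a b : PowerSeries ℝ} (ha : constantCoeff (R := ℝ) a = 0)
    (hb : constantCoeff (R := ℝ) b = 0) : pexp (a + b) = pexp a * pexp b := by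
  refine ode_unique (d⁄dX ℝ (a + b)) _ _ (derivative_pexp (by simp [ha, hb])) ?_ ?_
  · rw [Derivation.leibniz, smul_eq_mul, smul_eq_mul, derivative_pexp ha, derivative_pexp hb,
      map_add]
    ring
  · simp only [coeff_zero_eq_constantCoeff, map_mul, constantCoeff_pexp]
    norm_num

lemma pexp_zero : pexp 0 = 1 := by
  ext k
  simp only [pexp, coeff_mk, Finset.sum_range_succ']
  rw [Finset.sum_eq_zero fun m _ => by simp [zero_pow]]
  simp

/-- geometric series -/
noncomputable def G (c : ℝ) : PowerSeries ℝ := PowerSeries.mk fun v => c ^ v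

/-- log(1/(1-ct)) -/
noncomputable def L (c : ℝ) : PowerSeries ℝ :=
  PowerSeries.mk fun v => if v = 0 then 0 else c ^ v / v

lemma constantCoeff_L (c : ℝ) : constantCoeff (R := ℝ) (L c) = 0 := by
  rw [← coeff_zero_eq_constantCoeff]; simp [L]

lemma G_mul (c : ℝ) : G c * (1 - C (R := ℝ) c * X) = 1 := by
  ext k
  rw [mul_sub, mul_one, mul_comm (C (R := ℝ) c) X, ← mul_assoc, map_sub]
  cases k with
  | zero => simp [G, mul_comm, PowerSeries.coeff_zero_eq_constantCoeff]
  | succ k =>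
    rw [PowerSeries.coeff_mul_C, PowerSeries.coeff_succ_mul_X]
    simp [G, pow_succ, PowerSeries.coeff_one]

lemma inv_eq_G (c : ℝ) : (1 - C (R := ℝ) c * X)⁻¹ = G c := by
  rw [PowerSeries.inv_eq_iff_mul_eq_one (by simp)]
  exact G_mul c

lemma derivative_G (c : ℝ) : d⁄dX ℝ (G c) = (C (R := ℝ) c * G c) * G c := by
  ext k
  rw [coeff_derivative, mul_assoc, PowerSeries.coeff_C_mul, PowerSeries.coeff_mul]
  simp only [G, coeff_mk]
  rw [Finset.Nat.sum_antidiagonal_eq_sum_range_succ_mk]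
  have : ∀ i ∈ Finset.range (k + 1), c ^ i * c ^ (k - i) = c ^ k := by
    intro i hi
    rw [← pow_add]
    congr 1
    simp only [Finset.mem_range] at hi
    omega
  rw [Finset.sum_congr rfl this, Finset.sum_const, Finset.card_range]
  push_cast
  ring

lemma derivative_L (c : ℝ) : d⁄dX ℝ (L c) = C (R := ℝ) c * G c := by
  ext k
  rw [coeff_derivative, PowerSeries.coeff_C_mul]
  simp only [L, G, coeff_mk, Nat.succ_ne_zero, if_false]
  have : ((k : ℝ) + 1) ≠ 0 := by positivity
  rw [pow_succ]
  field_simp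
  push_cast; ring

lemma pexp_L (c : ℝ) : pexp (L c) = G c := by
  refine ode_unique (C (R := ℝ) c * G c) _ _ ?_ (derivative_G c) ?_
  · rw [derivative_pexp (constantCoeff_L c), derivative_L]
  · have h1 : constantCoeff (R := ℝ) (G c) = 1 := by
      rw [← coeff_zero_eq_constantCoeff]; simp [G]
    rw [coeff_zero_eq_constantCoeff, constantCoeff_pexp, h1]

lemma pexp_nsmul {a : PowerSeries ℝ} (ha : constantCoeff (R := ℝ) a = 0) (n : ℕ) :
    pexp (n • a) = pexp a ^ n := by
  induction n with
  | zero => simp [pexp_zero]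
  | succ n ih => rw [succ_nsmul, pexp_add (by simp [ha]) ha, ih, pow_succ]

lemma pexp_sum (s : Finset ℕ) (f : ℕ → PowerSeries ℝ) (hf : ∀ i ∈ s, constantCoeff (R := ℝ) (f i) = 0) :
    pexp (∑ i ∈ s, f i) = ∏ i ∈ s, pexp (f i) := by
  induction s using Finset.cons_induction with
  | empty => simp [pexp_zero]
  | cons i s his ih =>
    rw [Finset.sum_cons, Finset.prod_cons,
      pexp_add (hf i (Finset.mem_cons_self i s)) (by
        rw [map_sum]
        exact Finset.sum_eq_zero fun j hj => hf j (Finset.mem_cons_of_mem hj)),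
      ih fun j hj => hf j (Finset.mem_cons_of_mem hj)]

lemma hasSum_g {y : ℝ} (hy0 : 0 < y) (hy : y < 1) :
    HasSum (fun n : ℕ => ((n / 2 - 1 : ℕ) : ℝ) * y ^ n) (y ^ 4 / ((1 - y) * (1 - y ^ 2))) := by
  have hyn : ‖y‖ < 1 := by rw [Real.norm_eq_abs, abs_of_pos hy0]; exact hy
  have hyn' : ‖-y‖ < 1 := by rwa [norm_neg]
  have h1 : HasSum (fun n : ℕ => (n : ℝ) * y ^ n) (y / (1 - y) ^ 2) :=
    hasSum_coe_mul_geometric_of_norm_lt_one hyn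
  have h0 : HasSum (fun n : ℕ => y ^ n) (1 - y)⁻¹ := hasSum_geometric_of_norm_lt_one hyn
  have hm : HasSum (fun n : ℕ => (-y) ^ n) (1 - -y)⁻¹ := hasSum_geometric_of_norm_lt_one hyn'
  have hcomb := ((h1.mul_left (y ^ 4 / 2)).add (h0.mul_left (3 * y ^ 4 / 4))).add
    (hm.mul_left (y ^ 4 / 4))
  have key : ∀ n : ℕ, (((n + 4) / 2 - 1 : ℕ) : ℝ) * y ^ (n + 4) =
      y ^ 4 / 2 * ((n : ℝ) * y ^ n) + 3 * y ^ 4 / 4 * y ^ n + y ^ 4 / 4 * (-y) ^ n := by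
    intro n
    rw [neg_pow]
    rcases Nat.even_or_odd n with he | ho
    · obtain ⟨m, rfl⟩ := he
      rw [Even.neg_one_pow ⟨m, rfl⟩]
      have : ((m + m + 4) / 2 - 1 : ℕ) = m + 1 := by omega
      rw [this]
      push_cast
      ring
    · obtain ⟨m, rfl⟩ := ho
      rw [Odd.neg_one_pow ⟨m, rfl⟩]
      have : ((2 * m + 1 + 4) / 2 - 1 : ℕ) = m + 1 := by omega
      rw [this]
      push_cast
      ring
  rw [show (fun n : ℕ => y ^ 4 / 2 * ((n : ℝ) * y ^ n) + 3 * y ^ 4 / 4 * y ^ n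
      + y ^ 4 / 4 * (-y) ^ n) = fun n : ℕ => (((n + 4) / 2 - 1 : ℕ) : ℝ) * y ^ (n + 4)
    from funext fun n => (key n).symm] at hcomb
  have hfin := (hasSum_nat_add_iff (f := fun n : ℕ => ((n / 2 - 1 : ℕ) : ℝ) * y ^ n) 4).mp hcomb
  have hzero : ∑ i ∈ Finset.range 4, ((i / 2 - 1 : ℕ) : ℝ) * y ^ i = 0 := by
    norm_num [Finset.sum_range_succ]
  rw [hzero, add_zero] at hfin
  convert hfin using 1
  · rfl
  have hne1 : (1 : ℝ) - y ≠ 0 := by linarith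
  have hne2 : (1 : ℝ) + y ≠ 0 := by linarith
  have hne3 : (1 : ℝ) - y ^ 2 ≠ 0 := by nlinarith
  rw [sub_neg_eq_add]
  field_simp
  ring

lemma tendsto_coeff_pow (A : ℕ → PowerSeries ℝ) (h : PowerSeries ℝ)
    (hA : ∀ v, Tendsto (fun N => coeff (R := ℝ) v (A N)) atTop (nhds (coeff (R := ℝ) v h))) :
    ∀ m k : ℕ, Tendsto (fun N => coeff (R := ℝ) k (A N ^ m)) atTop (nhds (coeff (R := ℝ) k (h ^ m))) := by
  intro m
  induction m with
  | zero => intro k; simp only [pow_zero]; exact tendsto_const_nhds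
  | succ m ih =>
    intro k
    simp only [pow_succ, PowerSeries.coeff_mul]
    exact tendsto_finset_sum _ fun p _ => (ih p.1).mul (hA p.2)

lemma tendsto_coeff_pexp (A : ℕ → PowerSeries ℝ) (h : PowerSeries ℝ)
    (hA : ∀ v, Tendsto (fun N => coeff (R := ℝ) v (A N)) atTop (nhds (coeff (R := ℝ) v h))) (k : ℕ) :
    Tendsto (fun N => coeff (R := ℝ) k (pexp (A N))) atTop (nhds (coeff (R := ℝ) k (pexp h))) := by
  simp only [pexp, coeff_mk]
  exact tendsto_finset_sum _ fun m _ => (tendsto_coeff_pow A h hA m k).const_mul _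

end ZBGL2

open ZBGL2 in
/-- For a prime power `q`, the infinite product
`∏_{n ≥ 4} (1 - q^{-n} t)^{-(⌊n/2⌋ - 1)}` in `ℝ[[t]]` converges term by term to the
zeta function `Z(BGL₂, t) = exp (∑_{v ≥ 1} t^v / (v (q^{2v} - 1)(q^{2v} - q^v)))`. -/
theorem zeta_BGL2_product (q : ℕ) (hq : IsPrimePow q) :
    ∀ k : ℕ,
      Tendsto
        (fun N : ℕ => PowerSeries.coeff (R := ℝ) k
          (∏ n ∈ Finset.Icc 4 N,
            ((1 - PowerSeries.C (R := ℝ) (((q : ℝ) ^ n)⁻¹) * PowerSeries.X)⁻¹) ^ (n / 2 - 1)))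
        atTop
        (nhds (PowerSeries.coeff (R := ℝ) k (pexp (PowerSeries.mk fun v =>
          if v = 0 then 0
          else 1 / (v * ((q : ℝ) ^ (2 * v) - 1) * ((q : ℝ) ^ (2 * v) - (q : ℝ) ^ v)))))) := by
  intro k
  have hq2 : 2 ≤ q := hq.two_le
  have hq2' : (2 : ℝ) ≤ (q : ℝ) := by exact_mod_cast hq2
  set h : PowerSeries ℝ := PowerSeries.mk fun v =>
    if v = 0 then 0
    else 1 / (v * ((q : ℝ) ^ (2 * v) - 1) * ((q : ℝ) ^ (2 * v) - (q : ℝ) ^ v)) with hdef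
  set A : ℕ → PowerSeries ℝ := fun N =>
    ∑ n ∈ Finset.Icc 4 N, (n / 2 - 1) • L (((q : ℝ) ^ n)⁻¹) with hAdef
  have hprod : ∀ N : ℕ,
      (∏ n ∈ Finset.Icc 4 N,
        ((1 - PowerSeries.C (R := ℝ) (((q : ℝ) ^ n)⁻¹) * PowerSeries.X)⁻¹) ^ (n / 2 - 1)) =
      pexp (A N) := by
    intro N
    rw [hAdef, pexp_sum _ _ fun n _ => by
      rw [map_nsmul, constantCoeff_L, smul_zero]]
    refine Finset.prod_congr rfl fun n _ => ?_
    rw [inv_eq_G, ← pexp_L, ← pexp_nsmul (constantCoeff_L _)]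
  have hgoalfun : (fun N : ℕ => PowerSeries.coeff (R := ℝ) k
      (∏ n ∈ Finset.Icc 4 N,
        ((1 - PowerSeries.C (R := ℝ) (((q : ℝ) ^ n)⁻¹) * PowerSeries.X)⁻¹) ^ (n / 2 - 1))) =
      fun N => coeff (R := ℝ) k (pexp (A N)) := funext fun N => by rw [hprod N]
  rw [hgoalfun]
  refine tendsto_coeff_pexp A h ?_ k
  intro v
  rcases Nat.eq_zero_or_pos v with rfl | hv
  · have hzero : ∀ N, coeff (R := ℝ) 0 (A N) = 0 := by
      intro N
      rw [hAdef, map_sum]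
      refine Finset.sum_eq_zero fun n _ => ?_
      rw [map_nsmul, coeff_zero_eq_constantCoeff, constantCoeff_L, smul_zero]
    simp only [hzero, hdef, coeff_mk, if_pos rfl]
    exact tendsto_const_nhds
  · -- v ≥ 1
    set y : ℝ := (((q : ℝ) ^ v)⁻¹) with hydef
    have hQ : (2 : ℝ) ≤ (q : ℝ) ^ v := le_trans hq2' (by
      calc (q : ℝ) = (q : ℝ) ^ 1 := (pow_one _).symm
        _ ≤ (q : ℝ) ^ v := pow_le_pow_right₀ (by linarith) hv)
    have hy0 : 0 < y := by rw [hydef]; positivity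
    have hy1 : y < 1 := by
      rw [hydef, inv_lt_one_iff₀]; right; linarith
    have hco : ∀ N, coeff (R := ℝ) v (A N) =
        (∑ n ∈ Finset.range (N + 1), ((n / 2 - 1 : ℕ) : ℝ) * y ^ n) / v := by
      intro N
      rw [hAdef, map_sum, Finset.sum_div]
      have e1 : ∀ n ∈ Finset.Icc 4 N, coeff (R := ℝ) v ((n / 2 - 1) • L (((q : ℝ) ^ n)⁻¹)) =
          ((n / 2 - 1 : ℕ) : ℝ) * y ^ n / v := by
        intro n _
        rw [map_nsmul, nsmul_eq_mul]
        have hcv : coeff (R := ℝ) v (L (((q : ℝ) ^ n)⁻¹)) = y ^ n / v := by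
          simp only [L, coeff_mk, if_neg hv.ne']
          congr 1
          rw [hydef, inv_pow, inv_pow, ← pow_mul, ← pow_mul, mul_comm]
        rw [hcv, mul_div_assoc]
      rw [Finset.sum_congr rfl e1]
      refine Finset.sum_subset (fun x hx => Finset.mem_range.mpr
        (by simp only [Finset.mem_Icc] at hx; omega)) ?_
      intro n hn hn'
      have hz : n / 2 - 1 = 0 := by
        simp only [Finset.mem_range, Finset.mem_Icc] at hn hn'
        omega
      rw [hz]
      simp
    have hsum := hasSum_g hy0 hy1
    have htend := hsum.tendsto_sum_nat.comp (tendsto_add_atTop_nat 1)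
    have htend2 := htend.div_const (v : ℝ)
    have hlim : (y ^ 4 / ((1 - y) * (1 - y ^ 2))) / v = coeff (R := ℝ) v h := by
      rw [hdef, coeff_mk, if_neg hv.ne']
      have hQ0 : ((q : ℝ) ^ v) ≠ 0 := by positivity
      have hv0 : (v : ℝ) ≠ 0 := Nat.cast_ne_zero.mpr hv.ne'
      have h2v : (q : ℝ) ^ (2 * v) = ((q : ℝ) ^ v) ^ 2 := by
        rw [mul_comm, pow_mul]
      have hne1 : (1 : ℝ) - y ≠ 0 := by linarith
      have hne2 : (1 : ℝ) - y ^ 2 ≠ 0 := by nlinarith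
      have hd1 : ((q : ℝ) ^ v) ^ 2 - 1 ≠ 0 := by nlinarith
      have hd2 : ((q : ℝ) ^ v) ^ 2 - (q : ℝ) ^ v ≠ 0 := by nlinarith
      rw [h2v, div_div, div_eq_div_iff
        (mul_ne_zero (mul_ne_zero hne1 hne2) hv0)
        (mul_ne_zero (mul_ne_zero hv0 hd1) hd2), hydef]
      field_simp
    rw [← hlim]
    convert htend2 using 1
    funext N
    rw [hco N]
    rfl
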